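/- Let S(x,y) = Σ_{n ≥ 0} Σ_{m ≥ 0} S_n^m x^n y^m be the bivariate formal power series over ℚ whose coefficients are S_n^m. Then S satisfies the polynomial equation x²y · S(x,y)² − (1 − x + x²y) · S(x,y) + 1 = 0 in the ring of formal power series in x and y. -/

import Mathlib

/-- The numbers `S_n^m` (OEIS A089732): `S_n^m = (1/(n-m)) · C(n-m, m) · C(n-m, m+1)`
for `n > m ≥ 0`, `S_0^0 = 1`, and `S_n^m = 0` whenever `2m ≥ n` and `n ≥ 1`. -/
def Scoef (n m : ℕ) : ℚ :=
  if m < n then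
    ((Nat.choose (n - m) m : ℚ) * (Nat.choose (n - m) (m + 1) : ℚ)) / ((n : ℚ) - (m : ℚ))
  else if n = 0 ∧ m = 0 then 1
  else 0

/-- The bivariate generating function `S(x,y) = Σ_{n ≥ 0} Σ_{m ≥ 0} S_n^m x^n y^m` as a formal
power series in two commuting variables over `ℚ`: the coefficient of `x^n y^m` is `S_n^m`. -/
noncomputable def Sxy : MvPowerSeries (Fin 2) ℚ := fun d => Scoef (d 0) (d 1)

open MvPowerSeries Finset

noncomputable section
open MvPowerSeries Finset

noncomputable section

abbrev MV := MvPowerSeries (Fin 2) ℚ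

/-- exponent vector (a, b) -/
def e2 (a b : ℕ) : Fin 2 →₀ ℕ := Finsupp.single 0 a + Finsupp.single 1 b

@[simp] lemma e2_apply0 (a b : ℕ) : e2 a b 0 = a := by
  simp [e2, Finsupp.single_apply]

@[simp] lemma e2_apply1 (a b : ℕ) : e2 a b 1 = b := by
  simp [e2, Finsupp.single_apply]

lemma fin2_eq_e2 (d : Fin 2 →₀ ℕ) : d = e2 (d 0) (d 1) := by
  ext i
  fin_cases i
  · simp
  · simp

@[simp] lemma e2_zero : e2 0 0 = 0 := by simp [e2]

lemma e2_le_iff {a b : ℕ} {d : Fin 2 →₀ ℕ} : e2 a b ≤ d ↔ a ≤ d 0 ∧ b ≤ d 1 := by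
  constructor
  · intro h
    exact ⟨by simpa using h 0, by simpa using h 1⟩
  · rintro ⟨h0, h1⟩ i
    fin_cases i
    · simpa using h0
    · simpa using h1

lemma sub_e2_apply0 (a b : ℕ) (d : Fin 2 →₀ ℕ) : (d - e2 a b) 0 = d 0 - a := by
  simp [Finsupp.tsub_apply]

lemma sub_e2_apply1 (a b : ℕ) (d : Fin 2 →₀ ℕ) : (d - e2 a b) 1 = d 1 - b := by
  simp [Finsupp.tsub_apply]

/-- the monomial x^a y^b -/
def mon (a b : ℕ) : MV := MvPowerSeries.monomial (e2 a b) 1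

lemma e2_add (a b c d : ℕ) : e2 a b + e2 c d = e2 (a + c) (b + d) := by
  simp only [e2, Finsupp.single_add]
  abel

lemma mon_mul_mon (a b c d : ℕ) : mon a b * mon c d = mon (a + c) (b + d) := by
  simp [mon, monomial_mul_monomial, e2_add]

@[simp] lemma mon_zero : mon 0 0 = 1 := by
  simp [mon]

lemma X0_eq : (X 0 : MV) = mon 1 0 := by
  simp [mon, X_def, e2]

lemma X1_eq : (X 1 : MV) = mon 0 1 := by
  simp [mon, X_def, e2]

lemma Xpow_eq (a b : ℕ) : (X 0 : MV) ^ a * (X 1 : MV) ^ b = mon a b := by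
  rw [MvPowerSeries.X_pow_eq, MvPowerSeries.X_pow_eq, mon, monomial_mul_monomial, one_mul, e2]

/-- series from an explicit coefficient function -/
def ofF (F : ℕ → ℕ → ℚ) : MV := fun d => F (d 0) (d 1)

@[simp] lemma coeff_ofF (F : ℕ → ℕ → ℚ) (d : Fin 2 →₀ ℕ) :
    coeff d (ofF F) = F (d 0) (d 1) := rfl

lemma coeff_mon_mul (f : MV) (a b : ℕ) (d : Fin 2 →₀ ℕ) :
    coeff d (mon a b * f) =
      if a ≤ d 0 ∧ b ≤ d 1 then coeff (d - e2 a b) f else 0 := by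
  rw [mon, coeff_monomial_mul]
  by_cases h : e2 a b ≤ d
  · rw [if_pos h, if_pos (e2_le_iff.mp h), one_mul]
  · rw [if_neg h, if_neg (fun hc => h (e2_le_iff.mpr hc))]

lemma coeff_mon_mul_ofF (F : ℕ → ℕ → ℚ) (a b : ℕ) (d : Fin 2 →₀ ℕ) :
    coeff d (mon a b * ofF F) =
      if a ≤ d 0 ∧ b ≤ d 1 then F (d 0 - a) (d 1 - b) else 0 := by
  rw [coeff_mon_mul]
  by_cases h : a ≤ d 0 ∧ b ≤ d 1
  · rw [if_pos h, if_pos h, coeff_ofF, sub_e2_apply0, sub_e2_apply1]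
  · rw [if_neg h, if_neg h]

/-- coefficients of `(1 - x - x^2 y)^{-r}` -/
def vc (r n m : ℕ) : ℚ :=
  if m ≤ n then ((r + (n - m) - 1).choose (n - m) * (n - m).choose m : ℕ) else 0

def Vs (r : ℕ) : MV := ofF (vc r)

/-- A = 1 - x - x^2 y -/
def Amv : MV := 1 - mon 1 0 - mon 2 1

lemma coeff_Amv_mul_ofF (F : ℕ → ℕ → ℚ) (d : Fin 2 →₀ ℕ) :
    coeff d (Amv * ofF F) =
      F (d 0) (d 1) - (if 1 ≤ d 0 then F (d 0 - 1) (d 1) else 0)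
        - (if 2 ≤ d 0 ∧ 1 ≤ d 1 then F (d 0 - 2) (d 1 - 1) else 0) := by
  have h1 : Amv * ofF F = mon 0 0 * ofF F - mon 1 0 * ofF F - mon 2 1 * ofF F := by
    rw [Amv]; ring_nf; rw [mon_zero]; ring
  rw [h1, map_sub, map_sub, coeff_mon_mul_ofF, coeff_mon_mul_ofF, coeff_mon_mul_ofF]
  congr 1
  congr 1
  · simp

/-- The key Pascal-type identity for the coefficients of inverse powers of A. -/
lemma vc_pascal (r n m : ℕ) :
    vc (r + 1) n m - (if 1 ≤ n then vc (r + 1) (n - 1) m else 0)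
      - (if 2 ≤ n ∧ 1 ≤ m then vc (r + 1) (n - 2) (m - 1) else 0) = vc r n m := by
  rcases lt_trichotomy n m with hnm | rfl | hmn
  · -- m > n : everything vanishes
    have hv1 : vc (r + 1) n m = 0 := by rw [vc, if_neg (by omega)]
    have hvR : vc r n m = 0 := by rw [vc, if_neg (by omega)]
    have h2 : (if 1 ≤ n then vc (r + 1) (n - 1) m else 0) = 0 := by
      split_ifs with h
      · rw [vc, if_neg (by omega)]
      · rfl
    have h3 : (if 2 ≤ n ∧ 1 ≤ m then vc (r + 1) (n - 2) (m - 1) else 0) = 0 := by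
      split_ifs with h
      · rw [vc, if_neg (by omega)]
      · rfl
    rw [hv1, hvR, h2, h3]
    ring
  · -- m = n
    have h2 : (if 1 ≤ n then vc (r + 1) (n - 1) n else 0) = 0 := by
      split_ifs with h
      · rw [vc, if_neg (by omega)]
      · rfl
    have h3 : (if 2 ≤ n ∧ 1 ≤ n then vc (r + 1) (n - 2) (n - 1) else 0) = 0 := by
      split_ifs with h
      · rw [vc, if_neg (by omega)]
      · rfl
    rw [h2, h3, vc, if_pos le_rfl, vc, if_pos le_rfl]
    simp
  · -- m < n : n = m + N + 1
    obtain ⟨N, rfl⟩ : ∃ N, n = m + N + 1 := ⟨n - m - 1, by omega⟩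
    have e1 : m + N + 1 - m = N + 1 := by omega
    have e2 : m + N + 1 - 1 = m + N := by omega
    have e3 : m + N - m = N := by omega
    have key1 : vc (r + 1) (m + N + 1) m = ((r + N + 1).choose (N + 1) * (N + 1).choose m : ℕ) := by
      rw [vc, if_pos (by omega), e1, show r + 1 + (N + 1) - 1 = r + N + 1 from by omega]
    have key2 : vc (r + 1) (m + N) m = ((r + N).choose N * N.choose m : ℕ) := by
      rw [vc, if_pos (by omega), e3, show r + 1 + N - 1 = r + N from by omega]
    have keyR : vc r (m + N + 1) m = ((r + N).choose (N + 1) * (N + 1).choose m : ℕ) := by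
      rw [vc, if_pos (by omega), e1, show r + (N + 1) - 1 = r + N from by omega]
    have hp2 : ((r + N + 1).choose (N + 1) : ℚ) = (r + N).choose N + (r + N).choose (N + 1) := by
      exact_mod_cast congrArg (Nat.cast (R := ℚ)) (Nat.choose_succ_succ (r + N) N)
    rcases Nat.eq_zero_or_pos m with rfl | hm
    · -- m = 0
      rw [if_pos (by omega), if_neg (by omega), e2, key1, key2, keyR]
      push_cast
      rw [hp2]
      simp
    · -- m ≥ 1
      obtain ⟨m', rfl⟩ : ∃ m', m = m' + 1 := ⟨m - 1, by omega⟩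
      have e4 : m' + 1 + N + 1 - 2 = m' + N := by omega
      have e5 : m' + 1 - 1 = m' := by omega
      have key3 : vc (r + 1) (m' + N) m' = ((r + N).choose N * N.choose m' : ℕ) := by
        rw [vc, if_pos (by omega), show m' + N - m' = N from by omega,
          show r + 1 + N - 1 = r + N from by omega]
      rw [if_pos (by omega), if_pos (by omega), e2, e4, e5, key1, key2, key3, keyR]
      have hp1 : ((N + 1).choose (m' + 1) : ℚ) = N.choose m' + N.choose (m' + 1) := by
        exact_mod_cast congrArg (Nat.cast (R := ℚ)) (Nat.choose_succ_succ N m')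
      push_cast
      rw [hp2, hp1]
      ring

lemma Amv_mul_Vs (r : ℕ) : Amv * Vs (r + 1) = Vs r := by
  apply MvPowerSeries.ext
  intro d
  rw [Vs, Vs, coeff_Amv_mul_ofF, coeff_ofF]
  exact vc_pascal r (d 0) (d 1)

lemma Vs_zero : Vs 0 = 1 := by
  apply MvPowerSeries.ext
  intro d
  classical
  rw [Vs, coeff_ofF, MvPowerSeries.coeff_one]
  by_cases h : d = 0
  · subst h
    simp [vc]
  · rw [if_neg h]
    have hd : ¬(d 0 = 0 ∧ d 1 = 0) := by
      intro ⟨h0, h1⟩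
      apply h
      rw [fin2_eq_e2 d, h0, h1, e2_zero]
    rw [vc]
    split_ifs with hle
    · rcases Nat.eq_zero_or_pos (d 0 - d 1) with hK | hK
      · -- then d 0 = d 1, both nonzero
        have : d 1 ≠ 0 := by omega
        rw [hK]
        simp [Nat.choose_eq_zero_of_lt (by omega : 0 < d 1)]
      · rw [Nat.choose_eq_zero_of_lt (by omega : 0 + (d 0 - d 1) - 1 < d 0 - d 1)]
        simp
    · rfl

lemma Apow_mul_Vs (r : ℕ) : Amv ^ r * Vs r = 1 := by
  induction r with
  | zero => rw [pow_zero, one_mul, Vs_zero]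
  | succ n ih =>
      have : Amv ^ (n + 1) * Vs (n + 1) = Amv ^ n * (Amv * Vs (n + 1)) := by ring
      rw [this, Amv_mul_Vs, ih]

lemma Amv_cancel {f g : MV} (t : ℕ) (h : Amv ^ t * f = Amv ^ t * g) : f = g := by
  have h1 : Vs t * (Amv ^ t * f) = Vs t * (Amv ^ t * g) := by rw [h]
  have h2 : ∀ x : MV, Vs t * (Amv ^ t * x) = x := by
    intro x
    rw [← mul_assoc, mul_comm (Vs t), Apow_mul_Vs, one_mul]
  rw [h2, h2] at h1
  exact h1

lemma Vs_mul_Vs (r s : ℕ) : Vs r * Vs s = Vs (r + s) := by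
  apply Amv_cancel (r + s)
  have h1 : Amv ^ (r + s) * (Vs r * Vs s) = (Amv ^ r * Vs r) * (Amv ^ s * Vs s) := by
    rw [pow_add]; ring
  rw [h1, Apow_mul_Vs, Apow_mul_Vs, Apow_mul_Vs, one_mul]

def catk (k : ℕ) : ℚ := (catalan k : ℚ)

/-- x^{3k} y^k / A^{2k} -/
def Mk (k : ℕ) : MV := mon (3 * k) k * Vs (2 * k)

/-- x^{3k} y^k / A^{2k+1} -/
def Mk' (k : ℕ) : MV := mon (3 * k) k * Vs (2 * k + 1)

lemma coeff_Mk (k : ℕ) (d : Fin 2 →₀ ℕ) :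
    coeff d (Mk k) =
      if 3 * k ≤ d 0 ∧ k ≤ d 1 then vc (2 * k) (d 0 - 3 * k) (d 1 - k) else 0 := by
  rw [Mk, Vs, coeff_mon_mul_ofF]

lemma coeff_Mk' (k : ℕ) (d : Fin 2 →₀ ℕ) :
    coeff d (Mk' k) =
      if 3 * k ≤ d 0 ∧ k ≤ d 1 then vc (2 * k + 1) (d 0 - 3 * k) (d 1 - k) else 0 := by
  rw [Mk', Vs, coeff_mon_mul_ofF]

lemma coeff_Mk_zero {k : ℕ} {d : Fin 2 →₀ ℕ} (h : d 1 < k) : coeff d (Mk k) = 0 := by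
  rw [coeff_Mk, if_neg (by omega)]

lemma coeff_Mk'_zero {k : ℕ} {d : Fin 2 →₀ ℕ} (h : d 1 < k) : coeff d (Mk' k) = 0 := by
  rw [coeff_Mk', if_neg (by omega)]

/-- the coefficients of the series `Σ_k catalan k x^{3k} y^k A^{-(2k+1)}` -/
def chatF (n m : ℕ) : ℚ :=
  ∑ k ∈ range (m + 1),
    catk k * (if 3 * k ≤ n ∧ k ≤ m then vc (2 * k + 1) (n - 3 * k) (m - k) else 0)

def Chat : MV := ofF chatF

lemma coeff_Chat (d : Fin 2 →₀ ℕ) :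
    coeff d Chat = ∑ k ∈ range (d 1 + 1), catk k * coeff d (Mk' k) := by
  rw [Chat, coeff_ofF, chatF]
  refine Finset.sum_congr rfl fun k _ => ?_
  rw [coeff_Mk']

lemma coeff_Chat_ext (d : Fin 2 →₀ ℕ) {N : ℕ} (hN : d 1 + 1 ≤ N) :
    coeff d Chat = ∑ k ∈ range N, catk k * coeff d (Mk' k) := by
  rw [coeff_Chat]
  apply Finset.sum_subset (Finset.range_subset_range.mpr hN)
  intro k hk hk'
  rw [coeff_Mk'_zero (by simp only [Finset.mem_range] at hk'; omega), mul_zero]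

/-- pulling the (locally finite) sum defining Chat out of products -/
lemma coeff_mul_Chat (g : MV) (d : Fin 2 →₀ ℕ) :
    coeff d (g * Chat) = ∑ k ∈ range (d 1 + 1), catk k * coeff d (g * Mk' k) := by
  classical
  rw [MvPowerSeries.coeff_mul]
  have step1 : ∀ p ∈ Finset.HasAntidiagonal.antidiagonal d,
      coeff p.1 g * coeff p.2 Chat =
        ∑ k ∈ range (d 1 + 1), catk k * (coeff p.1 g * coeff p.2 (Mk' k)) := by
    intro p hp
    have hmem := Finset.HasAntidiagonal.mem_antidiagonal.mp hp
    have hle : p.2 1 + 1 ≤ d 1 + 1 := by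
      have : p.1 1 + p.2 1 = d 1 := by
        rw [← hmem]; simp
      omega
    rw [coeff_Chat_ext p.2 hle, Finset.mul_sum]
    refine Finset.sum_congr rfl fun k _ => by ring
  rw [Finset.sum_congr rfl step1, Finset.sum_comm]
  refine Finset.sum_congr rfl fun k _ => ?_
  rw [MvPowerSeries.coeff_mul, Finset.mul_sum]

lemma Amv_mul_Mk' (k : ℕ) : Amv * Mk' k = Mk k := by
  rw [Mk', Mk, show Amv * (mon (3 * k) k * Vs (2 * k + 1)) =
    mon (3 * k) k * (Amv * Vs (2 * k + 1)) from by ring, Amv_mul_Vs]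

lemma mon31_Mk'_Mk' (k l : ℕ) : mon 3 1 * Mk' k * Mk' l = Mk (k + l + 1) := by
  rw [Mk', Mk', Mk]
  rw [show mon 3 1 * (mon (3 * k) k * Vs (2 * k + 1)) * (mon (3 * l) l * Vs (2 * l + 1)) =
    mon 3 1 * mon (3 * k) k * mon (3 * l) l * (Vs (2 * k + 1) * Vs (2 * l + 1)) from by ring]
  rw [mon_mul_mon, mon_mul_mon, Vs_mul_Vs,
    show 3 + 3 * k + 3 * l = 3 * (k + l + 1) from by ring,
    show 1 + k + l = k + l + 1 from by ring,
    show 2 * k + 1 + (2 * l + 1) = 2 * (k + l + 1) from by ring]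

lemma Mk_zero_eq : Mk 0 = 1 := by
  rw [Mk]
  norm_num
  rw [Vs_zero]

/-- The quadratic equation for Chat, coefficientwise. -/
lemma Chat_quadratic : Amv * Chat = 1 + mon 3 1 * Chat ^ 2 := by
  classical
  apply MvPowerSeries.ext
  intro d
  set m := d 1 with hm
  -- LHS
  have hL : coeff d (Amv * Chat) = ∑ k ∈ range (m + 1), catk k * coeff d (Mk k) := by
    rw [coeff_mul_Chat]
    exact Finset.sum_congr rfl fun k _ => by rw [Amv_mul_Mk']
  -- RHS
  have hsq : mon 3 1 * Chat ^ 2 = (mon 3 1 * Chat) * Chat := by ring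
  have hR : coeff d (mon 3 1 * Chat ^ 2) =
      ∑ l ∈ range (m + 1), ∑ k ∈ range (m + 1),
        catk l * catk k * coeff d (Mk (l + k + 1)) := by
    rw [hsq, coeff_mul_Chat]
    refine Finset.sum_congr rfl fun l _ => ?_
    rw [show mon 3 1 * Chat * Mk' l = (mon 3 1 * Mk' l) * Chat from by ring, coeff_mul_Chat,
      Finset.mul_sum]
    refine Finset.sum_congr rfl fun k _ => ?_
    rw [show mon 3 1 * Mk' l * Mk' k = Mk (l + k + 1) from mon31_Mk'_Mk' l k]
    ring
  rw [map_add, hL, hR]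
  -- now a pure sum identity
  have hGz : ∀ j, m < j → coeff d (Mk j) = 0 := fun j hj => coeff_Mk_zero hj
  have hG0 : coeff d (Mk 0) = coeff d (1 : MV) := by rw [Mk_zero_eq]
  -- peel off k = 0 on the left
  rw [Finset.sum_range_succ' (fun k => catk k * coeff d (Mk k)) m]
  have hcat0 : catk 0 * coeff d (Mk 0) = coeff d (1 : MV) := by
    rw [hG0, catk]
    norm_num
  rw [hcat0]
  -- so it remains to identify the sum over range m with the double sum
  have key : ∑ i ∈ range m, catk (i + 1) * coeff d (Mk (i + 1)) =
      ∑ l ∈ range (m + 1), ∑ k ∈ range (m + 1),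
        catk l * catk k * coeff d (Mk (l + k + 1)) := by
    -- expand catalan (i+1) by the Catalan recursion
    have hexp : ∀ i, catk (i + 1) =
        ∑ p ∈ Finset.HasAntidiagonal.antidiagonal i, catk p.1 * catk p.2 := by
      intro i
      rw [catk, catalan_succ']
      push_cast
      rfl
    calc ∑ i ∈ range m, catk (i + 1) * coeff d (Mk (i + 1))
        = ∑ i ∈ range m, ∑ p ∈ Finset.HasAntidiagonal.antidiagonal i,
            catk p.1 * catk p.2 * coeff d (Mk (p.1 + p.2 + 1)) := by
          refine Finset.sum_congr rfl fun i _ => ?_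
          rw [hexp i, Finset.sum_mul]
          refine Finset.sum_congr rfl fun p hp => ?_
          rw [Finset.HasAntidiagonal.mem_antidiagonal.mp hp]
      _ = ∑ p ∈ (range m).biUnion (fun i => Finset.HasAntidiagonal.antidiagonal i),
            catk p.1 * catk p.2 * coeff d (Mk (p.1 + p.2 + 1)) := by
          rw [Finset.sum_biUnion]
          intro i _ j _ hij
          apply Finset.disjoint_left.mpr
          intro p hpi hpj
          exact hij (by rw [← Finset.HasAntidiagonal.mem_antidiagonal.mp hpi, Finset.HasAntidiagonal.mem_antidiagonal.mp hpj])
      _ = ∑ p ∈ range (m + 1) ×ˢ range (m + 1),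
            catk p.1 * catk p.2 * coeff d (Mk (p.1 + p.2 + 1)) := by
          apply Finset.sum_subset
          · intro p hp
            rw [Finset.mem_biUnion] at hp
            obtain ⟨i, hi, hpi⟩ := hp
            have := Finset.HasAntidiagonal.mem_antidiagonal.mp hpi
            rw [Finset.mem_range] at hi
            rw [Finset.mem_product, Finset.mem_range, Finset.mem_range]
            omega
          · intro p _ hp
            have hbig : m < p.1 + p.2 + 1 := by
              by_contra hc
              apply hp
              rw [Finset.mem_biUnion]
              exact ⟨p.1 + p.2, Finset.mem_range.mpr (by omega),
                Finset.HasAntidiagonal.mem_antidiagonal.mpr rfl⟩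
            rw [hGz _ hbig, mul_zero]
      _ = ∑ l ∈ range (m + 1), ∑ k ∈ range (m + 1),
            catk l * catk k * coeff d (Mk (l + k + 1)) := by
          rw [Finset.sum_product]
  rw [key]
  ring

end



/-- universal committee-chair identity -/
lemma choose_mul_all (a b c : ℕ) :
    a.choose (b + c) * (b + c).choose b = a.choose b * (a - b).choose c := by
  by_cases h : b + c ≤ a
  · have := Nat.choose_mul (n := a) (Nat.le_add_right b c)
    rwa [Nat.add_sub_cancel_left] at this
  · rw [Nat.choose_eq_zero_of_lt (by omega), zero_mul]
    by_cases hb : b ≤ a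
    · rw [Nat.choose_eq_zero_of_lt (show a - b < c by omega), mul_zero]
    · rw [Nat.choose_eq_zero_of_lt (by omega), zero_mul]

/-- the same, cast to ℚ -/
lemma choose_mul_allQ (a b c : ℕ) :
    (a.choose (b + c) : ℚ) * (b + c).choose b = a.choose b * (a - b).choose c := by
  exact_mod_cast congrArg (Nat.cast (R := ℚ)) (choose_mul_all a b c)

lemma tri1 {k m : ℕ} (N : ℕ) (hk : k ≤ m) :
    ((2 * k).choose k : ℚ) * (N.choose (2 * k)) * ((N - 2 * k).choose (m - k)) =
      (N.choose m) * ((m.choose k) * ((N - m).choose k)) := by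
  have h1 : (N.choose (2 * k) : ℚ) * (2 * k).choose k = N.choose k * (N - k).choose k := by
    have := choose_mul_allQ N k k
    rwa [show k + k = 2 * k from by ring] at this
  have h2 : ((N - k).choose m : ℚ) * m.choose k = (N - k).choose k * (N - 2 * k).choose (m - k) := by
    have := choose_mul_allQ (N - k) k (m - k)
    rwa [show k + (m - k) = m from by omega, show N - k - k = N - 2 * k from by omega] at this
  have h3 : (N.choose (k + m) : ℚ) * (k + m).choose k = N.choose k * (N - k).choose m :=
    choose_mul_allQ N k m
  have h4 : (N.choose (m + k) : ℚ) * (m + k).choose m = N.choose m * (N - m).choose k :=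
    choose_mul_allQ N m k
  have h5 : ((m + k).choose k : ℚ) = (m + k).choose m := by
    exact_mod_cast congrArg (Nat.cast (R := ℚ))
      (by rw [← Nat.choose_symm (Nat.le_add_left k m), Nat.add_sub_cancel] :
        (m + k).choose m = (m + k).choose k).symm
  calc ((2 * k).choose k : ℚ) * (N.choose (2 * k)) * ((N - 2 * k).choose (m - k))
      = (N.choose k : ℚ) * (N - k).choose k * (N - 2 * k).choose (m - k) := by
        linear_combination ((N - 2 * k).choose (m - k) : ℚ) * h1
    _ = (N.choose k : ℚ) * ((N - k).choose m * m.choose k) := by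
        linear_combination (N.choose k : ℚ) * h2.symm
    _ = (N.choose (k + m) : ℚ) * (k + m).choose k * m.choose k := by
        linear_combination (m.choose k : ℚ) * h3.symm
    _ = (N.choose (m + k) : ℚ) * (m + k).choose m * m.choose k := by
        rw [add_comm k m, h5]
    _ = (N.choose m : ℚ) * ((m.choose k) * ((N - m).choose k)) := by
        linear_combination (m.choose k : ℚ) * h4

lemma tri2 {k m : ℕ} (N : ℕ) (hk1 : 1 ≤ k) (hk : k ≤ m) :
    ((2 * k).choose (k + 1) : ℚ) * (N.choose (2 * k)) * ((N - 2 * k).choose (m - k)) =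
      (N.choose (m + 1)) * (((m + 1).choose (k + 1)) * ((N - m - 1).choose (k - 1))) := by
  have g1 : (N.choose (2 * k) : ℚ) * (2 * k).choose (k + 1) =
      N.choose (k + 1) * (N - (k + 1)).choose (k - 1) := by
    have := choose_mul_allQ N (k + 1) (k - 1)
    rwa [show k + 1 + (k - 1) = 2 * k from by omega] at this
  have g2 : ((N - k - 1).choose (m - 1) : ℚ) * (m - 1).choose (k - 1) =
      (N - k - 1).choose (k - 1) * (N - 2 * k).choose (m - k) := by
    have := choose_mul_allQ (N - k - 1) (k - 1) (m - k)
    rwa [show k - 1 + (m - k) = m - 1 from by omega,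
      show N - k - 1 - (k - 1) = N - 2 * k from by omega] at this
  have g4 : ((N - k - 1).choose (m - 1) : ℚ) * (m - 1).choose (m - k) =
      (N - k - 1).choose (m - k) * (N - m - 1).choose (k - 1) := by
    have := choose_mul_allQ (N - k - 1) (m - k) (k - 1)
    rwa [show m - k + (k - 1) = m - 1 from by omega,
      show N - k - 1 - (m - k) = N - m - 1 from by omega] at this
  have gs : ((m - 1).choose (m - k) : ℚ) = (m - 1).choose (k - 1) := by
    have := Nat.choose_symm (show m - k ≤ m - 1 from by omega)
    rw [show m - 1 - (m - k) = k - 1 from by omega] at this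
    exact_mod_cast congrArg (Nat.cast (R := ℚ)) this.symm
  have g3 : (N.choose (m + 1) : ℚ) * (m + 1).choose (k + 1) =
      N.choose (k + 1) * (N - (k + 1)).choose (m - k) := by
    have := choose_mul_allQ N (k + 1) (m - k)
    rwa [show k + 1 + (m - k) = m + 1 from by omega] at this
  have e1 : N - (k + 1) = N - k - 1 := by omega
  rw [e1] at g1 g3
  calc ((2 * k).choose (k + 1) : ℚ) * (N.choose (2 * k)) * ((N - 2 * k).choose (m - k))
      = (N.choose (k + 1) : ℚ) * (N - k - 1).choose (k - 1) * (N - 2 * k).choose (m - k) := by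
        linear_combination ((N - 2 * k).choose (m - k) : ℚ) * g1
    _ = (N.choose (k + 1) : ℚ) * ((N - k - 1).choose (m - 1) * (m - 1).choose (k - 1)) := by
        linear_combination (N.choose (k + 1) : ℚ) * g2.symm
    _ = (N.choose (k + 1) : ℚ) * ((N - k - 1).choose (m - k) * (N - m - 1).choose (k - 1)) := by
        rw [← gs]
        linear_combination (N.choose (k + 1) : ℚ) * g4
    _ = (N.choose (m + 1) : ℚ) * (((m + 1).choose (k + 1)) * ((N - m - 1).choose (k - 1))) := by
        linear_combination ((N - m - 1).choose (k - 1) : ℚ) * g3.symm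

/-- catalan k = C(2k,k) - C(2k,k+1) over ℚ -/
lemma cat_split (k : ℕ) :
    (catalan k : ℚ) = ((2 * k).choose k : ℚ) - ((2 * k).choose (k + 1) : ℚ) := by
  have hc1 : ((k : ℚ) + 1) * (catalan k : ℚ) = ((2 * k).choose k : ℚ) := by
    have := succ_mul_catalan_eq_centralBinom k
    have h2 : k.centralBinom = (2 * k).choose k := rfl
    rw [h2] at this
    exact_mod_cast congrArg (Nat.cast (R := ℚ)) this
  have hc2 : ((2 * k).choose (k + 1) : ℚ) * ((k : ℚ) + 1) = ((2 * k).choose k : ℚ) * k := by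
    have := Nat.choose_succ_right_eq (2 * k) k
    rw [show 2 * k - k = k from by omega] at this
    exact_mod_cast congrArg (Nat.cast (R := ℚ)) this
  have hne : ((k : ℚ) + 1) ≠ 0 := by positivity
  apply mul_left_cancel₀ hne
  rw [hc1]
  linear_combination hc2

/-- Vandermonde, first form -/
lemma sum1 {m N : ℕ} (h : m ≤ N) :
    ∑ k ∈ range (m + 1), ((m.choose k : ℚ) * ((N - m).choose k : ℚ)) = (N.choose m : ℚ) := by
  have key : ∑ k ∈ range (m + 1), (m.choose k * (N - m).choose k : ℕ) = N.choose m := by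
    have hv : N.choose m = ∑ k ∈ range (m + 1), m.choose k * (N - m).choose (m - k) := by
      have h0 : N.choose m = (m + (N - m)).choose m := by rw [show m + (N - m) = N from by omega]
      rw [h0, Nat.add_choose_eq]
      rw [Finset.Nat.sum_antidiagonal_eq_sum_range_succ (fun i j => m.choose i * (N - m).choose j)]
    rw [hv, ← Finset.sum_range_reflect (fun k => m.choose k * (N - m).choose (m - k)) (m + 1)]
    refine Finset.sum_congr rfl fun j hj => ?_
    rw [Finset.mem_range] at hj
    rw [show m + 1 - 1 - j = m - j from by omega, show m - (m - j) = j from by omega,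
      Nat.choose_symm (show j ≤ m from by omega)]
  exact_mod_cast congrArg (Nat.cast (R := ℚ)) key

/-- Vandermonde, second form -/
lemma sum2 {m N : ℕ} (h : m + 1 ≤ N) (hm : 1 ≤ m) :
    ∑ i ∈ range m, (((m + 1).choose (i + 2) : ℚ) * ((N - m - 1).choose i : ℚ)) =
      (N.choose (m - 1) : ℚ) := by
  have key : ∑ i ∈ range m, ((m + 1).choose (i + 2) * (N - m - 1).choose i : ℕ) =
      N.choose (m - 1) := by
    have hv : N.choose (m - 1) =
        ∑ i ∈ range m, (m + 1).choose i * (N - m - 1).choose (m - 1 - i) := by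
      have h0 : N.choose (m - 1) = ((m + 1) + (N - m - 1)).choose (m - 1) := by
        rw [show (m + 1) + (N - m - 1) = N from by omega]
      rw [h0, Nat.add_choose_eq]
      have := Finset.Nat.sum_antidiagonal_eq_sum_range_succ
        (fun i j => (m + 1).choose i * (N - m - 1).choose j) (m - 1)
      rw [this, show (m - 1).succ = m from by omega]
    rw [hv, ← Finset.sum_range_reflect (fun i => (m + 1).choose i * (N - m - 1).choose (m - 1 - i)) m]
    refine Finset.sum_congr rfl fun i hi => ?_
    rw [Finset.mem_range] at hi
    rw [show m - 1 - (m - 1 - i) = i from by omega]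
    congr 1
    have hsym := Nat.choose_symm (show i + 2 ≤ m + 1 from by omega)
    rw [show m + 1 - (i + 2) = m - 1 - i from by omega] at hsym
    exact hsym.symm
  exact_mod_cast congrArg (Nat.cast (R := ℚ)) key

/-- determinant identity for Narayana numbers -/
lemma det_identity (N m : ℕ) :
    ((N + 1).choose m : ℚ) * ((N + 1).choose (m + 1) : ℚ) / ((N : ℚ) + 1) =
      (N.choose m : ℚ) ^ 2 -
        (N.choose (m + 1) : ℚ) * (if m = 0 then 0 else (N.choose (m - 1) : ℚ)) := by
  have hN1 : ((N : ℚ) + 1) ≠ 0 := by positivity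
  rcases Nat.eq_zero_or_pos m with rfl | hm
  · simp [Nat.choose_one_right]
    exact hN1
  · obtain ⟨m', rfl⟩ : ∃ m', m = m' + 1 := ⟨m - 1, by omega⟩
    rw [if_neg (by omega), Nat.add_sub_cancel]
    by_cases hmN : m' + 1 ≤ N
    · -- main case
      have r1 : (N.choose (m' + 2) : ℚ) * ((m' : ℚ) + 2) = (N.choose (m' + 1) : ℚ) * ((N : ℚ) - (m' + 1)) := by
        have := Nat.choose_succ_right_eq N (m' + 1)
        have hc := congrArg (Nat.cast (R := ℚ)) this
        push_cast [Nat.cast_sub hmN] at hc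
        linarith [hc]
      have r2 : (N.choose (m' + 1) : ℚ) * ((m' : ℚ) + 1) = (N.choose m' : ℚ) * ((N : ℚ) - m') := by
        have := Nat.choose_succ_right_eq N m'
        have hc := congrArg (Nat.cast (R := ℚ)) this
        push_cast [Nat.cast_sub (show m' ≤ N from by omega)] at hc
        linarith [hc]
      have p1 : ((N + 1).choose (m' + 1) : ℚ) = (N.choose m' : ℚ) + (N.choose (m' + 1) : ℚ) := by
        exact_mod_cast congrArg (Nat.cast (R := ℚ)) (Nat.choose_succ_succ N m')
      have p2 : ((N + 1).choose (m' + 2) : ℚ) = (N.choose (m' + 1) : ℚ) + (N.choose (m' + 2) : ℚ) := by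
        exact_mod_cast congrArg (Nat.cast (R := ℚ)) (Nat.choose_succ_succ N (m' + 1))
      have hm1 : ((m' : ℚ) + 2) ≠ 0 := by positivity
      have hNm : ((N : ℚ) - m') ≠ 0 := by
        have : (m' : ℚ) + 1 ≤ N := by exact_mod_cast hmN
        nlinarith
      have hR : (N.choose (m' + 2) : ℚ) = (N.choose (m' + 1) : ℚ) * ((N : ℚ) - (m' + 1)) / ((m' : ℚ) + 2) := by
        field_simp
        linarith [r1]
      have hP : (N.choose m' : ℚ) = (N.choose (m' + 1) : ℚ) * ((m' : ℚ) + 1) / ((N : ℚ) - m') := by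
        field_simp
        linarith [r2]
      rw [show m' + 1 + 1 = m' + 2 from rfl] at *
      rw [p1, p2, div_eq_iff hN1, hR, hP]
      field_simp
      ring
    · -- m > N : everything is zero
      rw [Nat.choose_eq_zero_of_lt (show N < m' + 1 from by omega),
        Nat.choose_eq_zero_of_lt (show N < m' + 1 + 1 from by omega),
        Nat.choose_eq_zero_of_lt (show N + 1 < m' + 1 + 1 from by omega)]
      push_cast
      ring

/-- The γ-expansion of the Narayana triangle: the central binomial identity. -/
lemma narayana_gamma (N m : ℕ) :
    ((N + 1).choose m : ℚ) * ((N + 1).choose (m + 1) : ℚ) / ((N : ℚ) + 1) =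
      ∑ k ∈ range (m + 1),
        (catalan k : ℚ) * ((N.choose (2 * k) : ℚ) * (((N - 2 * k).choose (m - k) : ℚ))) := by
  rw [det_identity N m]
  -- split via catalan = C(2k,k) - C(2k,k+1)
  have h2 : ∑ k ∈ range (m + 1),
      (catalan k : ℚ) * ((N.choose (2 * k) : ℚ) * (((N - 2 * k).choose (m - k) : ℚ))) =
      (∑ k ∈ range (m + 1),
        ((2 * k).choose k : ℚ) * (N.choose (2 * k) : ℚ) * (((N - 2 * k).choose (m - k) : ℚ)))
      - ∑ k ∈ range (m + 1),
        ((2 * k).choose (k + 1) : ℚ) * (N.choose (2 * k) : ℚ)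
          * (((N - 2 * k).choose (m - k) : ℚ)) := by
    rw [← Finset.sum_sub_distrib]
    refine Finset.sum_congr rfl fun k _ => ?_
    rw [cat_split k]
    ring
  rw [h2]
  -- first sum
  have h3 : (∑ k ∈ range (m + 1),
      ((2 * k).choose k : ℚ) * (N.choose (2 * k) : ℚ) * (((N - 2 * k).choose (m - k) : ℚ)))
      = (N.choose m : ℚ) * ∑ k ∈ range (m + 1), (m.choose k : ℚ) * ((N - m).choose k : ℚ) := by
    rw [Finset.mul_sum]
    refine Finset.sum_congr rfl fun k hk => ?_
    rw [Finset.mem_range] at hk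
    rw [tri1 N (show k ≤ m from by omega)]
  -- second sum
  have h4 : (∑ k ∈ range (m + 1),
      ((2 * k).choose (k + 1) : ℚ) * (N.choose (2 * k) : ℚ)
        * (((N - 2 * k).choose (m - k) : ℚ)))
      = (N.choose (m + 1) : ℚ) *
          ∑ i ∈ range m, ((m + 1).choose (i + 2) : ℚ) * ((N - m - 1).choose i : ℚ) := by
    rw [Finset.sum_range_succ' (fun k => ((2 * k).choose (k + 1) : ℚ) * (N.choose (2 * k) : ℚ)
      * (((N - 2 * k).choose (m - k) : ℚ))) m]
    have hz : ((2 * 0).choose (0 + 1) : ℚ) * (N.choose (2 * 0) : ℚ)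
        * (((N - 2 * 0).choose (m - 0) : ℚ)) = 0 := by
      norm_num
    rw [hz, add_zero, Finset.mul_sum]
    refine Finset.sum_congr rfl fun i hi => ?_
    rw [Finset.mem_range] at hi
    have := tri2 (k := i + 1) (m := m) N (by omega) (by omega)
    rw [show i + 1 + 1 = i + 2 from rfl, show i + 1 - 1 = i from rfl] at this
    rw [this]
  rw [h3, h4]
  -- final case analysis
  rcases Nat.eq_zero_or_pos m with rfl | hm
  · norm_num
  · rw [if_neg (by omega)]
    by_cases hmN : m ≤ N
    · have hs1 : ∑ k ∈ range (m + 1), (m.choose k : ℚ) * ((N - m).choose k : ℚ)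
          = (N.choose m : ℚ) := sum1 hmN
      rw [hs1]
      have hs2 : (N.choose (m + 1) : ℚ) *
          (∑ i ∈ range m, ((m + 1).choose (i + 2) : ℚ) * ((N - m - 1).choose i : ℚ))
          = (N.choose (m + 1) : ℚ) * (N.choose (m - 1) : ℚ) := by
        by_cases hmN1 : m + 1 ≤ N
        · rw [sum2 hmN1 hm]
        · rw [Nat.choose_eq_zero_of_lt (show N < m + 1 from by omega)]
          norm_num
      rw [hs2]
      ring
    · rw [Nat.choose_eq_zero_of_lt (show N < m from by omega),
        Nat.choose_eq_zero_of_lt (show N < m + 1 from by omega)]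
      ring

/-- The key coefficient identity: the explicit coefficients of `Sxy` agree with those of
`1 + x·Chat`. -/
lemma Scoef_eq (n m : ℕ) :
    Scoef n m = (if n = 0 ∧ m = 0 then 1 else 0) + (if 1 ≤ n then chatF (n - 1) m else 0) := by
  rcases Nat.eq_zero_or_pos n with rfl | hn
  · rw [Scoef, if_neg (show ¬(m < 0) from by omega), if_neg (show ¬((1:ℕ) ≤ 0) from by omega)]
    simp
  rw [if_neg (show ¬(n = 0 ∧ m = 0) from by omega), if_pos (show (1:ℕ) ≤ n from hn), zero_add]
  by_cases hmn : m < n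
  · -- main case
    obtain ⟨N, rfl⟩ : ∃ N, n = m + N + 1 := ⟨n - m - 1, by omega⟩
    rw [Scoef, if_pos (by omega), show m + N + 1 - m = N + 1 from by omega,
      show m + N + 1 - 1 = m + N from by omega]
    have hden : ((m + N + 1 : ℕ) : ℚ) - (m : ℚ) = (N : ℚ) + 1 := by push_cast; ring
    rw [hden]
    -- evaluate chatF
    have hterm : ∀ k ∈ range (m + 1),
        catk k * (if 3 * k ≤ m + N ∧ k ≤ m then vc (2 * k + 1) (m + N - 3 * k) (m - k) else 0)
          = (catalan k : ℚ) *
            ((N.choose (2 * k) : ℚ) * (((N - 2 * k).choose (m - k) : ℚ))) := by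
      intro k hk
      rw [Finset.mem_range] at hk
      rw [catk]
      by_cases h2k : 2 * k ≤ N
      · rw [if_pos ⟨by omega, by omega⟩, vc, if_pos (by omega),
          show m + N - 3 * k - (m - k) = N - 2 * k from by omega,
          show 2 * k + 1 + (N - 2 * k) - 1 = N from by omega,
          Nat.choose_symm (show 2 * k ≤ N from h2k)]
        push_cast
        ring
      · rw [Nat.choose_eq_zero_of_lt (show N < 2 * k from by omega)]
        have hz : (if 3 * k ≤ m + N ∧ k ≤ m then vc (2 * k + 1) (m + N - 3 * k) (m - k) else 0)
            = 0 := by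
          split_ifs with hc
          · rw [vc, if_neg (by omega)]
          · rfl
        rw [hz]
        norm_num
    rw [chatF, Finset.sum_congr rfl hterm, ← narayana_gamma N m]
  · -- m ≥ n ≥ 1 : both sides vanish
    rw [Scoef, if_neg hmn, if_neg (by omega)]
    rw [chatF]
    symm
    apply Finset.sum_eq_zero
    intro k _
    have hz : (if 3 * k ≤ n - 1 ∧ k ≤ m then vc (2 * k + 1) (n - 1 - 3 * k) (m - k) else 0)
        = 0 := by
      split_ifs with hc
      · rw [vc, if_neg (by omega)]
      · rfl
    rw [hz, mul_zero]

lemma fin2_zero_iff (d : Fin 2 →₀ ℕ) : d = 0 ↔ d 0 = 0 ∧ d 1 = 0 := by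
  constructor
  · intro h; rw [h]; simp
  · rintro ⟨h0, h1⟩
    rw [fin2_eq_e2 d, h0, h1, e2_zero]

/-- `S(x,y) = 1 + x·Chat` -/
lemma Sxy_eq : Sxy = 1 + mon 1 0 * Chat := by
  classical
  apply MvPowerSeries.ext
  intro d
  rw [map_add, Chat, coeff_mon_mul_ofF chatF 1 0 d, MvPowerSeries.coeff_one]
  have hc : MvPowerSeries.coeff d Sxy = Scoef (d 0) (d 1) := rfl
  rw [hc, Scoef_eq (d 0) (d 1), Nat.sub_zero]
  congr 1
  · by_cases h : d = 0
    · rw [if_pos h, if_pos ((fin2_zero_iff d).mp h)]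
    · rw [if_neg h, if_neg (fun hc' => h ((fin2_zero_iff d).mpr hc'))]
  · by_cases h : 1 ≤ d 0
    · rw [if_pos h, if_pos ⟨h, Nat.zero_le _⟩]
    · rw [if_neg h, if_neg (by tauto)]

/-- `S(x,y)` satisfies `x²y·S(x,y)² − (1 − x + x²y)·S(x,y) + 1 = 0` in `ℚ[[x,y]]`. -/
theorem Sxy_algebraic_equation :
    (MvPowerSeries.X 0) ^ 2 * (MvPowerSeries.X 1) * Sxy ^ 2 -
        (1 - MvPowerSeries.X 0 + (MvPowerSeries.X 0) ^ 2 * MvPowerSeries.X 1) * Sxy + 1 =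
      (0 : MvPowerSeries (Fin 2) ℚ) := by
  have hS : Sxy = 1 + (X 0 : MV) * Chat := by
    rw [X0_eq]
    exact Sxy_eq
  have hq : (1 - (X 0 : MV) - (X 0 : MV) ^ 2 * (X 1 : MV)) * Chat
      = 1 + (X 0 : MV) ^ 3 * (X 1 : MV) * Chat ^ 2 := by
    have h21 : mon 2 1 = (X 0 : MV) ^ 2 * (X 1 : MV) := by
      have := Xpow_eq 2 1
      rw [pow_one] at this
      exact this.symm
    have h31 : mon 3 1 = (X 0 : MV) ^ 3 * (X 1 : MV) := by
      have := Xpow_eq 3 1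
      rw [pow_one] at this
      exact this.symm
    have hx : mon 1 0 = (X 0 : MV) := X0_eq.symm
    have := Chat_quadratic
    rw [Amv, h21, h31, hx] at this
    exact this
  rw [hS]
  linear_combination (-(X 0 : MV)) * hq

end
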